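/- Let I = {m} with m ≥ 1 a positive integer. If z₀ ∈ ℂ is a root of the polynomial d(I;z) = C(z,m) − 1, then |z₀| ≤ m and Re(z₀) ≥ −1. -/

import Mathlib

lemma aux_prod_sub (m : ℕ) : ∏ j ∈ Finset.range m, (m - j) = m.factorial := by
  induction m with
  | zero => simp
  | succ n ih =>
    rw [Finset.prod_range_succ']
    simp only [Nat.succ_sub_succ]
    rw [ih, Nat.sub_zero, Nat.factorial_succ, Nat.mul_comm]

/-- Theorem 4.4: any root `z₀` of `d({m};z) = C(z,m) − 1` satisfies
`|z₀| ≤ m` and `Re(z₀) ≥ −1`. -/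
theorem stmt_13 (m : ℕ) (hm : 1 ≤ m) (z₀ : ℂ)
    (hz : (∏ j ∈ Finset.range m, (z₀ - j)) / (m.factorial : ℂ) - 1 = 0) :
    ‖z₀‖ ≤ m ∧ -1 ≤ z₀.re := by
  have hfac : (0:ℝ) < (m.factorial : ℝ) := by positivity
  have hprod : (∏ j ∈ Finset.range m, (z₀ - j)) = (m.factorial : ℂ) := by
    have h := sub_eq_zero.mp hz
    rwa [div_eq_one_iff_eq (Nat.cast_ne_zero.mpr m.factorial_ne_zero)] at h
  have habs : ∏ j ∈ Finset.range m, ‖z₀ - j‖ = (m.factorial : ℝ) := by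
    rw [← norm_prod, hprod]
    simp
  have hne : (Finset.range m).Nonempty := Finset.nonempty_range_iff.mpr (by omega)
  constructor
  · by_contra h
    push_neg at h
    have key : (m.factorial : ℝ) < ∏ j ∈ Finset.range m, ‖z₀ - j‖ := by
      calc (m.factorial : ℝ) = ∏ j ∈ Finset.range m, ((m:ℝ) - j) := by
            rw [← aux_prod_sub m, Nat.cast_prod]
            exact Finset.prod_congr rfl fun j hj => by
              rw [Nat.cast_sub (le_of_lt (Finset.mem_range.mp hj))]
        _ < ∏ j ∈ Finset.range m, ‖z₀ - j‖ := by
            apply Finset.prod_lt_prod_of_nonempty _ _ hne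
            · intro j hj
              have : (j:ℝ) < m := by exact_mod_cast Finset.mem_range.mp hj
              linarith
            · intro j hj
              have hj' : (j:ℝ) < m := by exact_mod_cast Finset.mem_range.mp hj
              have h1 : ‖z₀‖ - ‖((j:ℕ):ℂ)‖ ≤ ‖z₀ - j‖ := by
                simpa using norm_sub_norm_le z₀ ((j:ℕ):ℂ)
              have h2 : ‖((j:ℕ):ℂ)‖ = (j:ℝ) := by
                simp
              linarith
    linarith [habs ▸ key]
  · by_contra h
    push_neg at h
    have key : (m.factorial : ℝ) < ∏ j ∈ Finset.range m, ‖z₀ - j‖ := by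
      calc (m.factorial : ℝ) = ∏ j ∈ Finset.range m, ((j:ℝ) + 1) := by
            rw [← Finset.prod_range_add_one_eq_factorial m, Nat.cast_prod]
            push_cast
            rfl
        _ < ∏ j ∈ Finset.range m, ‖z₀ - j‖ := by
            apply Finset.prod_lt_prod_of_nonempty _ _ hne
            · intro j hj; positivity
            · intro j hj
              have h1 : |(z₀ - j).re| ≤ ‖z₀ - j‖ := Complex.abs_re_le_norm _
              have h2 : (z₀ - j).re = z₀.re - j := by simp
              have h3 : -(z₀.re - j) ≤ |(z₀ - j).re| := by
                rw [h2]; exact neg_le_abs _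
              linarith
    linarith [habs ▸ key]
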